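/- arXiv:2009.00161 — 2 statements merged into one kernel-verified Lean document; each statement's English description precedes it below -/
import Mathlib

section
/- Let n ≥ 2, a_i > 0, b ∈ ℝⁿ, and define λ*(b) = (Σ_j b_j/(2a_j))/(Σ_j 1/(2a_j)) and P_i(b) = (λ*(b) - b_i)/(2a_i). Then for any fixed index i, the function b_i ↦ P_i(b) (with all other b_j fixed) is strictly decreasing, and for every j ≠ i the function b_i ↦ P_j(b) is strictly increasing. -/
noncomputable def clearingPrice (n : ℕ) (a b : Fin n → ℝ) : ℝ :=
  (∑ j, b j / (2 * a j)) / (∑ j, 1 / (2 * a j))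

noncomputable def optPower (n : ℕ) (a b : Fin n → ℝ) (i : Fin n) : ℝ :=
  (clearingPrice n a b - b i) / (2 * a i)

theorem power_monotone_in_b (n : ℕ) (hn : 2 ≤ n) (a : Fin n → ℝ)
    (ha : ∀ i, 0 < a i) (i : Fin n) (b b' : Fin n → ℝ)
    (hlt : b' i < b i) (hfix : ∀ j, j ≠ i → b' j = b j) :
    optPower n a b i < optPower n a b' i ∧
    ∀ j, j ≠ i → optPower n a b' j < optPower n a b j := by
  haveI : NeZero n := ⟨by omega⟩
  haveI : Nontrivial (Fin n) := Fin.nontrivial_iff_two_le.mpr hn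
  set S := ∑ j, 1 / (2 * a j) with hSdef
  have hpos : ∀ j : Fin n, 0 < 1 / (2 * a j) := fun j => by
    have := ha j; positivity
  have hS : 0 < S := Finset.sum_pos (fun j _ => hpos j) ⟨i, Finset.mem_univ i⟩
  obtain ⟨k, hk⟩ := exists_ne i
  have hSi : 1 / (2 * a i) < S := by
    apply Finset.single_lt_sum hk (Finset.mem_univ i) (Finset.mem_univ k) (hpos k)
    intro t _ _
    exact le_of_lt (hpos t)
  have hai : (0:ℝ) < 2 * a i := by have := ha i; linarith
  have hsum : ∑ j, b' j / (2 * a j)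
      = (∑ j, b j / (2 * a j)) + (b' i - b i) / (2 * a i) := by
    have h1 : ∑ j, (b' j / (2 * a j) - b j / (2 * a j)) = (b' i - b i) / (2 * a i) := by
      rw [Finset.sum_eq_single i]
      · ring
      · intro j _ hj
        rw [hfix j hj]; ring
      · intro h; exact absurd (Finset.mem_univ i) h
    rw [Finset.sum_sub_distrib] at h1
    linarith
  have hcp : clearingPrice n a b' =
      clearingPrice n a b + ((b' i - b i) / (2 * a i)) / S := by
    unfold clearingPrice
    rw [hsum, add_div]
  constructor
  · unfold optPower
    rw [hcp]
    rw [div_lt_div_iff_of_pos_right hai, div_div]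
    have h2ai : 1 < 2 * a i * S := by
      have := (div_lt_iff₀ hai).mp hSi
      nlinarith
    have hd : b' i - b i < (b' i - b i) / (2 * a i * S) := by
      rw [lt_div_iff₀ (by positivity)]
      nlinarith
    linarith
  · intro j hj
    unfold optPower
    rw [hcp, hfix j hj]
    have haj : (0:ℝ) < 2 * a j := by have := ha j; linarith
    rw [div_lt_div_iff_of_pos_right haj]
    have : ((b' i - b i) / (2 * a i)) / S < 0 := by
      apply div_neg_of_neg_of_pos _ hS
      exact div_neg_of_neg_of_pos (by linarith) hai
    linarith
end

section
/- Suppose the P2P market without trade weights (d_{ij} = 0) has its set S of successfully traded peers partitioned into connected components S_1,…,S_K of the communication graph restricted to S, with K ≥ 2. If (P_{ij}, λ_{ij}) satisfy the KKT conditions 2a_i P_{i,tr} + b_i = λ_{ij} = λ_{ji} and P_{ij} = -P_{ji} on every edge within S, then within each component S_k all transaction prices equal a common value λ*_k = (Σ_{j∈S_k} b_j/(2a_j))/(Σ_{j∈S_k} 1/(2a_j)), Σ_{i∈S_k} P_{i,tr} = 0, and P_{i,tr} = (λ*_k - b_i)/(2a_i) for i ∈ S_k. -/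
theorem clustered_p2p_market (n : ℕ) (G : SimpleGraph (Fin n))
    [DecidableRel G.Adj] [DecidableEq G.ConnectedComponent]
    (hK : 2 ≤ Fintype.card G.ConnectedComponent)
    (a b : Fin n → ℝ) (ha : ∀ i, 0 < a i)
    (Ptr : Fin n → ℝ) (P lam : Fin n → Fin n → ℝ)
    (hdeg : ∀ i, 0 < G.degree i)
    (hPtr : ∀ i, Ptr i = ∑ j ∈ G.neighborFinset i, P i j)
    (hKKT : ∀ i j, G.Adj i j → lam i j = 2 * a i * Ptr i + b i)
    (hsym : ∀ i j, G.Adj i j → lam i j = lam j i)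
    (hanti : ∀ i j, G.Adj i j → P i j = -P j i) :
    ∀ c : G.ConnectedComponent,
      let Sk : Finset (Fin n) := Finset.univ.filter fun i => G.connectedComponentMk i = c
      let lamk : ℝ := (∑ j ∈ Sk, b j / (2 * a j)) / (∑ j ∈ Sk, 1 / (2 * a j))
      (∀ i j, G.Adj i j → G.connectedComponentMk i = c → lam i j = lamk) ∧
      (∑ i ∈ Sk, Ptr i) = 0 ∧
      ∀ i, G.connectedComponentMk i = c → Ptr i = (lamk - b i) / (2 * a i) := by
  intro c Sk lamk
  set μ : Fin n → ℝ := fun i => 2 * a i * Ptr i + b i with hμdef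
  have hmu_adj : ∀ i j, G.Adj i j → μ i = μ j := by
    intro i j h
    have h1 := hKKT i j h
    have h2 := hKKT j i h.symm
    have h3 := hsym i j h
    simp only [hμdef]
    rw [← h1, ← h2, h3]
  have hmu_reach : ∀ i j : Fin n, G.Reachable i j → μ i = μ j := by
    intro i j h
    obtain ⟨w⟩ := h
    induction w with
    | nil => rfl
    | cons hadj _ ih => exact (hmu_adj _ _ hadj).trans ih
  obtain ⟨r, hr⟩ := c.exists_rep
  have hmem : ∀ i, i ∈ Sk ↔ G.connectedComponentMk i = c := by
    intro i; simp [Sk]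
  have hrS : r ∈ Sk := (hmem r).2 hr
  have hmuconst : ∀ i ∈ Sk, μ i = μ r := by
    intro i hi
    apply hmu_reach
    exact SimpleGraph.ConnectedComponent.eq.mp (((hmem i).1 hi).trans hr.symm)
  have hSksum : (∑ i ∈ Sk, Ptr i) = 0 := by
    have hrw : ∀ i ∈ Sk, Ptr i = ∑ j ∈ Sk, if G.Adj i j then P i j else 0 := by
      intro i hi
      rw [hPtr i, ← Finset.sum_filter]
      congr 1
      ext j
      simp only [SimpleGraph.mem_neighborFinset, Finset.mem_filter]
      constructor
      · intro hadj
        refine ⟨(hmem j).2 ?_, hadj⟩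
        rw [← (hmem i).1 hi]
        exact SimpleGraph.ConnectedComponent.sound hadj.symm.reachable
      · exact fun h => h.2
    have hT : (∑ i ∈ Sk, ∑ j ∈ Sk, if G.Adj i j then P i j else 0)
        = -(∑ i ∈ Sk, ∑ j ∈ Sk, if G.Adj i j then P i j else 0) := by
      conv_lhs => rw [Finset.sum_comm]
      rw [← Finset.sum_neg_distrib]
      apply Finset.sum_congr rfl
      intro j _
      rw [← Finset.sum_neg_distrib]
      apply Finset.sum_congr rfl
      intro i _
      by_cases h : G.Adj i j
      · simp [h, h.symm, hanti i j h]
      · have h2 : ¬ G.Adj j i := fun hh => h hh.symm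
        simp [h, h2]
    rw [Finset.sum_congr rfl hrw]
    linarith [hT]
  have hPtr_eq : ∀ i, Ptr i = (μ i - b i) / (2 * a i) := by
    intro i
    have hai := (ha i).ne'
    field_simp [hμdef]
    simp only [hμdef]; ring
  have hD : 0 < ∑ j ∈ Sk, 1 / (2 * a j) :=
    Finset.sum_pos (fun j _ => by have := ha j; positivity) ⟨r, hrS⟩
  have hkey : μ r = lamk := by
    have h0 : ∑ j ∈ Sk, (μ r - b j) / (2 * a j) = 0 := by
      rw [← hSksum]
      apply Finset.sum_congr rfl
      intro j hj
      rw [hPtr_eq j, hmuconst j hj]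
    have hexp : ∑ j ∈ Sk, (μ r - b j) / (2 * a j)
        = μ r * (∑ j ∈ Sk, 1 / (2 * a j)) - ∑ j ∈ Sk, b j / (2 * a j) := by
      rw [Finset.mul_sum, ← Finset.sum_sub_distrib]
      apply Finset.sum_congr rfl
      intro j _
      have hai := (ha j).ne'
      field_simp
    show μ r = (∑ j ∈ Sk, b j / (2 * a j)) / (∑ j ∈ Sk, 1 / (2 * a j))
    rw [eq_div_iff hD.ne']
    rw [hexp] at h0
    linarith
  refine ⟨?_, hSksum, ?_⟩
  · intro i j hadj hic
    rw [hKKT i j hadj]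
    have : μ i = lamk := (hmuconst i ((hmem i).2 hic)).trans hkey
    simpa [hμdef] using this
  · intro i hic
    rw [hPtr_eq i, (hmuconst i ((hmem i).2 hic)).trans hkey]
end
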